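/- Let Φ: X ⊸ X be a contracting compact-valued multi-function on a complete metric space X with Lipschitz constant λ < 1. Then the fixed fractal 𝔽(Φ) = closure(⋃_{n∈ω} Φⁿ(Fix(Φ))) is nonempty and compact, and satisfies Φ(𝔽(Φ)) = 𝔽(Φ). -/

import Mathlib

open Set

/-- Image of a set under a set-valued map `Φ : X → Set X`. -/
def sImage {X : Type*} (Φ : X → Set X) (A : Set X) : Set X := ⋃ a ∈ A, Φ a

/-- Iterates `Φⁿ(A)`. -/
def sIter {X : Type*} (Φ : X → Set X) : ℕ → Set X → Set X
  | 0, A => A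
  | n + 1, A => sImage Φ (sIter Φ n A)

/-- Fixed points of a set-valued map. -/
def sFix {X : Type*} (Φ : X → Set X) : Set X := {x | x ∈ Φ x}

open Metric TopologicalSpace Filter Topology

section Aux

variable {X : Type*} [MetricSpace X] {Φ : X → Set X} {lam : ℝ}

lemma sImage_mono {A B : Set X} (h : A ⊆ B) : sImage Φ A ⊆ sImage Φ B :=
  Set.biUnion_subset_biUnion_left h

lemma mem_sImage {x a : X} {A : Set X} (ha : a ∈ A) (hx : x ∈ Φ a) : x ∈ sImage Φ A :=
  Set.mem_biUnion ha hx

lemma sImage_nonempty (hne : ∀ x, (Φ x).Nonempty) {A : Set X} (hA : A.Nonempty) :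
    (sImage Φ A).Nonempty := by
  obtain ⟨a, ha⟩ := hA
  obtain ⟨y, hy⟩ := hne a
  exact ⟨y, mem_sImage ha hy⟩

lemma hE (hc : ∀ x, IsCompact (Φ x)) (hne : ∀ x, (Φ x).Nonempty) (a b : X) :
    EMetric.hausdorffEdist (Φ a) (Φ b) ≠ ⊤ :=
  hausdorffEdist_ne_top_of_nonempty_of_bounded (hne a) (hne b) (hc a).isBounded (hc b).isBounded

lemma isCompact_sImage [CompleteSpace X] (hlam0 : 0 ≤ lam)
    (hc : ∀ x, IsCompact (Φ x)) (hne : ∀ x, (Φ x).Nonempty)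
    (hlip : ∀ x y, hausdorffDist (Φ x) (Φ y) ≤ lam * dist x y)
    {K : Set X} (hK : IsCompact K) : IsCompact (sImage Φ K) := by
  rcases K.eq_empty_or_nonempty with rfl | hKne
  · simp [sImage]
  rw [isCompact_iff_totallyBounded_isComplete]
  constructor
  · -- totally bounded
    rw [Metric.totallyBounded_iff]
    intro ε hε
    set δ : ℝ := ε / (2 * (lam + 1)) with hδdef
    have hδpos : 0 < δ := div_pos hε (by positivity)
    have hlδ : lam * δ < ε / 2 := by
      have h1 : (lam + 1) * δ = ε / 2 := by
        rw [hδdef]; field_simp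
      nlinarith
    obtain ⟨s, hsfin, hscov⟩ := (Metric.totallyBounded_iff).1 hK.totallyBounded δ hδpos
    choose t ht1 ht2 using fun a : X =>
      (Metric.totallyBounded_iff).1 (hc a).totallyBounded (ε / 2) (half_pos hε)
    refine ⟨⋃ a ∈ s, t a, hsfin.biUnion fun a _ => ht1 a, ?_⟩
    rintro x hx
    rw [sImage, Set.mem_iUnion₂] at hx
    obtain ⟨b, hbK, hxb⟩ := hx
    obtain ⟨a, haS, hba⟩ := Set.mem_iUnion₂.1 (hscov hbK)
    have h2 : infDist x (Φ a) < ε / 2 := by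
      calc infDist x (Φ a) ≤ hausdorffDist (Φ b) (Φ a) :=
            infDist_le_hausdorffDist_of_mem hxb (hE hc hne b a)
        _ ≤ lam * dist b a := hlip b a
        _ ≤ lam * δ := mul_le_mul_of_nonneg_left (le_of_lt hba) hlam0
        _ < ε / 2 := hlδ
    obtain ⟨y, hyΦ, hxy⟩ := (infDist_lt_iff (hne a)).1 h2
    obtain ⟨z, hzt, hyz⟩ := Set.mem_iUnion₂.1 (ht2 a hyΦ)
    refine Set.mem_iUnion₂.2 ⟨z, Set.mem_iUnion₂.2 ⟨a, haS, hzt⟩, ?_⟩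
    have : dist x z < ε := by
      calc dist x z ≤ dist x y + dist y z := dist_triangle _ _ _
        _ < ε / 2 + ε / 2 := add_lt_add hxy hyz
        _ = ε := add_halves ε
    exact this
  · -- closed hence complete
    refine (isClosed_of_closure_subset ?_).isComplete
    intro y hy
    -- minimize g x = infDist y (Φ x) over K
    set g : X → ℝ := fun x => infDist y (Φ x) with hg
    have hgl : ∀ a b : X, g a ≤ g b + lam * dist a b := by
      intro a b
      calc g a ≤ g b + hausdorffDist (Φ b) (Φ a) :=
            infDist_le_infDist_add_hausdorffDist (hE hc hne b a)
        _ ≤ g b + lam * dist b a := by linarith [hlip b a]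
        _ = g b + lam * dist a b := by rw [dist_comm]
    have hgc : Continuous g := by
      refine LipschitzWith.continuous (K := lam.toNNReal) ?_
      refine LipschitzWith.of_dist_le_mul fun a b => ?_
      rw [Real.coe_toNNReal _ hlam0, Real.dist_eq, abs_sub_le_iff]
      constructor
      · linarith [hgl a b]
      · have := hgl b a
        rw [dist_comm b a] at this
        linarith
    obtain ⟨x₀, hx₀K, hx₀min⟩ := hK.exists_isMinOn hKne hgc.continuousOn
    have hzero : g x₀ = 0 := by
      refine le_antisymm ?_ infDist_nonneg
      by_contra h
      push_neg at h
      obtain ⟨z, hz, hyz⟩ := Metric.mem_closure_iff.1 hy (g x₀) h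
      rw [sImage, Set.mem_iUnion₂] at hz
      obtain ⟨a, haK, hza⟩ := hz
      have : g x₀ ≤ g a := hx₀min haK
      have : g a ≤ dist y z := infDist_le_dist_of_mem hza
      linarith
    have : y ∈ Φ x₀ := ((hc x₀).isClosed.mem_iff_infDist_zero (hne x₀)).2 hzero
    exact mem_sImage hx₀K this

lemma hausdorffDist_sImage_le (hlam0 : 0 ≤ lam)
    (hc : ∀ x, IsCompact (Φ x)) (hne : ∀ x, (Φ x).Nonempty)
    (hlip : ∀ x y, hausdorffDist (Φ x) (Φ y) ≤ lam * dist x y)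
    {A B : Set X} (hA : IsCompact A) (hB : IsCompact B) (hAne : A.Nonempty) (hBne : B.Nonempty) :
    hausdorffDist (sImage Φ A) (sImage Φ B) ≤ lam * hausdorffDist A B := by
  have hABfin : EMetric.hausdorffEdist A B ≠ ⊤ :=
    hausdorffEdist_ne_top_of_nonempty_of_bounded hAne hBne hA.isBounded hB.isBounded
  have key : ∀ (A B : Set X), IsCompact A → IsCompact B → A.Nonempty → B.Nonempty →
      EMetric.hausdorffEdist A B ≠ ⊤ →
      ∀ x ∈ sImage Φ A, ∃ y ∈ sImage Φ B, dist x y ≤ lam * hausdorffDist A B := by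
    intro A B hA hB hAne hBne hfin x hx
    rw [sImage, Set.mem_iUnion₂] at hx
    obtain ⟨a, haA, hxa⟩ := hx
    obtain ⟨b, hbB, hab⟩ := hB.exists_infDist_eq_dist hBne a
    have hab' : dist a b ≤ hausdorffDist A B := by
      rw [← hab]; exact infDist_le_hausdorffDist_of_mem haA hfin
    obtain ⟨y, hyb, hxy⟩ := (hc b).exists_infDist_eq_dist (hne b) x
    refine ⟨y, mem_sImage hbB hyb, ?_⟩
    calc dist x y = infDist x (Φ b) := hxy.symm
      _ ≤ hausdorffDist (Φ a) (Φ b) := infDist_le_hausdorffDist_of_mem hxa (hE hc hne a b)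
      _ ≤ lam * dist a b := hlip a b
      _ ≤ lam * hausdorffDist A B := mul_le_mul_of_nonneg_left hab' hlam0
  refine hausdorffDist_le_of_mem_dist
    (mul_nonneg hlam0 hausdorffDist_nonneg) (key A B hA hB hAne hBne hABfin) ?_
  have := key B A hB hA hBne hAne (hausdorffEdist_ne_top_of_nonempty_of_bounded hBne hAne hB.isBounded hA.isBounded)
  intro y hy
  obtain ⟨x, hx, hxy⟩ := this y hy
  have hcomm : hausdorffDist A B = hausdorffDist B A := hausdorffDist_comm
  exact ⟨x, hx, by rw [hcomm]; exact hxy⟩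

lemma exists_sFix [CompleteSpace X] [Nonempty X] (hlam0 : 0 ≤ lam) (hlam : lam < 1)
    (hc : ∀ x, IsCompact (Φ x)) (hne : ∀ x, (Φ x).Nonempty)
    (hlip : ∀ x y, hausdorffDist (Φ x) (Φ y) ≤ lam * dist x y) :
    ∃ x, x ∈ Φ x := by
  choose f hf1 hf2 using fun x : X => (hc x).exists_infDist_eq_dist (hne x) x
  set u : ℕ → X := fun n => f^[n] (Classical.arbitrary X) with hu
  have hustep : ∀ n, u (n + 1) = f (u n) := fun n => Function.iterate_succ_apply' f n _
  have humem : ∀ n, u (n + 1) ∈ Φ (u n) := fun n => by rw [hustep]; exact hf1 (u n)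
  have hgeo : ∀ n, dist (u n) (u (n + 1)) ≤ dist (u 0) (u 1) * lam ^ n := by
    intro n
    induction n with
    | zero => simp
    | succ n ih =>
      have h1 : dist (u (n + 1)) (u (n + 2)) = infDist (u (n + 1)) (Φ (u (n + 1))) := by
        rw [hustep (n + 1)]; exact (hf2 (u (n + 1))).symm
      have h2 : infDist (u (n + 1)) (Φ (u (n + 1))) ≤
          hausdorffDist (Φ (u n)) (Φ (u (n + 1))) :=
        infDist_le_hausdorffDist_of_mem (humem n) (hE hc hne _ _)
      have h3 : hausdorffDist (Φ (u n)) (Φ (u (n + 1))) ≤ lam * dist (u n) (u (n + 1)) :=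
        hlip _ _
      calc dist (u (n + 1)) (u (n + 2)) ≤ lam * dist (u n) (u (n + 1)) := by
            rw [h1]; exact h2.trans h3
        _ ≤ lam * (dist (u 0) (u 1) * lam ^ n) := mul_le_mul_of_nonneg_left ih hlam0
        _ = dist (u 0) (u 1) * lam ^ (n + 1) := by ring
  have hcauchy : CauchySeq u := cauchySeq_of_le_geometric lam _ hlam hgeo
  obtain ⟨x, hx⟩ := cauchySeq_tendsto_of_complete hcauchy
  refine ⟨x, ?_⟩
  have key : ∀ n, infDist x (Φ x) ≤ dist x (u (n + 1)) + lam * dist (u n) x := by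
    intro n
    calc infDist x (Φ x) ≤ infDist (u (n + 1)) (Φ x) + dist x (u (n + 1)) :=
          infDist_le_infDist_add_dist
      _ ≤ hausdorffDist (Φ (u n)) (Φ x) + dist x (u (n + 1)) := by
          linarith [infDist_le_hausdorffDist_of_mem (humem n) (hE hc hne (u n) x)]
      _ ≤ lam * dist (u n) x + dist x (u (n + 1)) := by linarith [hlip (u n) x]
      _ = dist x (u (n + 1)) + lam * dist (u n) x := by ring
  have hlim : Tendsto (fun n => dist x (u (n + 1)) + lam * dist (u n) x) atTop (𝓝 0) := by
    have h1 : Tendsto (fun n => dist x (u (n + 1))) atTop (𝓝 0) := by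
      have := (tendsto_iff_dist_tendsto_zero.1 (hx.comp (tendsto_add_atTop_nat 1)))
      simpa [dist_comm] using this
    have h2 : Tendsto (fun n => lam * dist (u n) x) atTop (𝓝 (lam * 0)) :=
      (tendsto_iff_dist_tendsto_zero.1 hx).const_mul lam
    simpa using h1.add h2
  have hle : infDist x (Φ x) ≤ 0 := ge_of_tendsto' hlim key
  have hzero : infDist x (Φ x) = 0 := le_antisymm hle infDist_nonneg
  exact ((hc x).isClosed.mem_iff_infDist_zero (hne x)).2 hzero

end Aux

theorem stmt9 {X : Type*} [MetricSpace X] [CompleteSpace X] [Nonempty X]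
    (Φ : X → Set X) (lam : ℝ) (hlam0 : 0 ≤ lam) (hlam : lam < 1)
    (hc : ∀ x, IsCompact (Φ x)) (hne : ∀ x, (Φ x).Nonempty)
    (hlip : ∀ x y, Metric.hausdorffDist (Φ x) (Φ y) ≤ lam * dist x y) :
    (closure (⋃ n, sIter Φ n (sFix Φ))).Nonempty ∧
    IsCompact (closure (⋃ n, sIter Φ n (sFix Φ))) ∧
    sImage Φ (closure (⋃ n, sIter Φ n (sFix Φ))) = closure (⋃ n, sIter Φ n (sFix Φ)) := by
  classical
  haveI : Nonempty (NonemptyCompacts X) :=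
    ⟨⟨⟨{Classical.arbitrary X}, isCompact_singleton⟩, Set.singleton_nonempty _⟩⟩
  -- the induced contraction on nonempty compact sets
  set S : NonemptyCompacts X → NonemptyCompacts X := fun K =>
    ⟨⟨sImage Φ K, isCompact_sImage hlam0 hc hne hlip K.isCompact⟩,
      sImage_nonempty hne K.nonempty⟩ with hSdef
  have hScar : ∀ K : NonemptyCompacts X, (S K : Set X) = sImage Φ (K : Set X) := fun K => rfl
  have hS : ContractingWith lam.toNNReal S := by
    constructor
    · rwa [← Real.toNNReal_one, Real.toNNReal_lt_toNNReal_iff one_pos]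
    · refine LipschitzWith.of_dist_le_mul fun A B => ?_
      rw [Real.coe_toNNReal _ hlam0]
      show Metric.hausdorffDist (sImage Φ (A : Set X)) (sImage Φ (B : Set X)) ≤
        lam * Metric.hausdorffDist (A : Set X) (B : Set X)
      exact hausdorffDist_sImage_le hlam0 hc hne hlip A.isCompact B.isCompact
        A.nonempty B.nonempty
  set Kstar : NonemptyCompacts X := ContractingWith.fixedPoint S hS with hKdef
  have hKfix : S Kstar = Kstar := hS.fixedPoint_isFixedPt
  have hiter : ∀ (n : ℕ) (A : NonemptyCompacts X),
      ((S^[n] A : NonemptyCompacts X) : Set X) = sIter Φ n (A : Set X) := by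
    intro n A
    induction n with
    | zero => rfl
    | succ n ih =>
      rw [Function.iterate_succ_apply', hScar, ih]
      rfl
  have hconv : ∀ A : NonemptyCompacts X, Filter.Tendsto (fun n => dist (S^[n] A) Kstar)
      Filter.atTop (nhds 0) := fun A =>
    tendsto_iff_dist_tendsto_zero.1 (hS.tendsto_iterate_fixedPoint A)
  have hEcomp : ∀ (s t : Set X), IsCompact s → IsCompact t → s.Nonempty → t.Nonempty →
      EMetric.hausdorffEdist s t ≠ ⊤ := fun s t hs ht hsn htn =>
    Metric.hausdorffEdist_ne_top_of_nonempty_of_bounded hsn htn hs.isBounded ht.isBounded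
  -- a fixed point of Φ
  obtain ⟨x₀, hx₀⟩ := exists_sFix hlam0 hlam hc hne hlip (Φ := Φ)
  have hx₀Fix : x₀ ∈ sFix Φ := hx₀
  -- each fixed point belongs to Kstar
  have hFixKstar : sFix Φ ⊆ (Kstar : Set X) := by
    intro x hx
    set A : NonemptyCompacts X := ⟨⟨{x}, isCompact_singleton⟩, Set.singleton_nonempty _⟩
    have hxiter : ∀ n, x ∈ sIter Φ n ({x} : Set X) := by
      intro n
      induction n with
      | zero => exact rfl
      | succ n ih => exact mem_sImage ih hx
    have hkey : ∀ n, Metric.infDist x (Kstar : Set X) ≤ dist (S^[n] A) Kstar := by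
      intro n
      have hmem : x ∈ ((S^[n] A : NonemptyCompacts X) : Set X) := by
        rw [hiter n A]; exact hxiter n
      exact Metric.infDist_le_hausdorffDist_of_mem hmem
        (hEcomp _ _ (S^[n] A).isCompact Kstar.isCompact (S^[n] A).nonempty Kstar.nonempty)
    have : Metric.infDist x (Kstar : Set X) ≤ 0 := ge_of_tendsto' (hconv A) hkey
    have hzero : Metric.infDist x (Kstar : Set X) = 0 :=
      le_antisymm this Metric.infDist_nonneg
    exact (Kstar.isCompact.isClosed.mem_iff_infDist_zero Kstar.nonempty).2 hzero
  -- every iterate is inside Kstar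
  have hiterKstar : ∀ n, sIter Φ n (sFix Φ) ⊆ (Kstar : Set X) := by
    intro n
    induction n with
    | zero => exact hFixKstar
    | succ n ih =>
      have h1 : sIter Φ (n + 1) (sFix Φ) ⊆ sImage Φ (Kstar : Set X) := sImage_mono ih
      have h2 : sImage Φ (Kstar : Set X) = (Kstar : Set X) := by
        rw [← hScar]; exact congrArg _ hKfix
      rwa [h2] at h1
  have hUnionK : (⋃ n, sIter Φ n (sFix Φ)) ⊆ (Kstar : Set X) :=
    Set.iUnion_subset hiterKstar
  have hUne : (⋃ n, sIter Φ n (sFix Φ)).Nonempty :=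
    ⟨x₀, Set.mem_iUnion.2 ⟨0, hx₀Fix⟩⟩
  -- Kstar is contained in the closure of the union
  have hKsub : (Kstar : Set X) ⊆ closure (⋃ n, sIter Φ n (sFix Φ)) := by
    intro y hy
    set A : NonemptyCompacts X := ⟨⟨{x₀}, isCompact_singleton⟩, Set.singleton_nonempty _⟩
    have hsub : ∀ n, sIter Φ n ({x₀} : Set X) ⊆ ⋃ n, sIter Φ n (sFix Φ) := by
      intro n
      refine Set.Subset.trans ?_ (Set.subset_iUnion _ n)
      have : ∀ m, sIter Φ m ({x₀} : Set X) ⊆ sIter Φ m (sFix Φ) := by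
        intro m
        induction m with
        | zero => exact Set.singleton_subset_iff.2 hx₀Fix
        | succ m ih => exact sImage_mono ih
      exact this n
    have hkey : ∀ n, Metric.infDist y (⋃ n, sIter Φ n (sFix Φ)) ≤ dist (S^[n] A) Kstar := by
      intro n
      have hcarA : ((S^[n] A : NonemptyCompacts X) : Set X) = sIter Φ n ({x₀} : Set X) :=
        hiter n A
      have h1 : Metric.infDist y (⋃ n, sIter Φ n (sFix Φ)) ≤
          Metric.infDist y ((S^[n] A : NonemptyCompacts X) : Set X) :=
        Metric.infDist_le_infDist_of_subset (by rw [hcarA]; exact hsub n) (S^[n] A).nonempty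
      have h2 : Metric.infDist y ((S^[n] A : NonemptyCompacts X) : Set X) ≤
          Metric.hausdorffDist (Kstar : Set X) ((S^[n] A : NonemptyCompacts X) : Set X) :=
        Metric.infDist_le_hausdorffDist_of_mem hy
          (hEcomp _ _ Kstar.isCompact (S^[n] A).isCompact Kstar.nonempty (S^[n] A).nonempty)
      have h3 : Metric.hausdorffDist (Kstar : Set X) ((S^[n] A : NonemptyCompacts X) : Set X) =
          dist (S^[n] A) Kstar := by
        rw [Metric.NonemptyCompacts.dist_eq]
        exact Metric.hausdorffDist_comm
      linarith
    have : Metric.infDist y (⋃ n, sIter Φ n (sFix Φ)) ≤ 0 := ge_of_tendsto' (hconv A) hkey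
    have hzero : Metric.infDist y (⋃ n, sIter Φ n (sFix Φ)) = 0 :=
      le_antisymm this Metric.infDist_nonneg
    exact (Metric.mem_closure_iff_infDist_zero hUne).2 hzero
  have hclsub : closure (⋃ n, sIter Φ n (sFix Φ)) ⊆ (Kstar : Set X) :=
    closure_minimal hUnionK Kstar.isCompact.isClosed
  have hFeq : closure (⋃ n, sIter Φ n (sFix Φ)) = (Kstar : Set X) :=
    Set.Subset.antisymm hclsub hKsub
  refine ⟨?_, ?_, ?_⟩
  · rw [hFeq]; exact Kstar.nonempty
  · rw [hFeq]; exact Kstar.isCompact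
  · rw [hFeq, ← hScar]
    exact congrArg _ hKfix
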